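/- Let f_m, f : ℝ^k → ℝ (m ∈ ℕ) be real-valued convex functions with f_m → f pointwise on ℝ^k. Suppose f has a unique minimizer x* ∈ ℝ^k and, for each m, x_m ∈ ℝ^k is a minimizer of f_m. Then x_m → x* as m → ∞. -/

import Mathlib

open Filter Topology

lemma aux_bound {k : ℕ} (hk : k ≠ 0) {F : (Fin k → ℝ) → ℝ} (hF : ConvexOn ℝ Set.univ F)
    (x₀ : Fin k → ℝ) {R C : ℝ} (hR : 0 < R)
    (hC : ∀ (i : Fin k) (b : Bool),
      F (x₀ + Pi.single i (if b then (k : ℝ) * R else -((k : ℝ) * R))) ≤ C)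
    (a : Fin k → ℝ) (ha : dist a x₀ ≤ R) : F a ≤ C := by
  have hkR : (0:ℝ) < (k:ℝ) := by
    exact_mod_cast Nat.pos_of_ne_zero hk
  set c : Fin k → ℝ := fun i => a i - x₀ i with hc_def
  have hc : ∀ i, |c i| ≤ R := by
    intro i
    have h1 : |c i| = ‖(a - x₀) i‖ := by simp [hc_def, Real.norm_eq_abs]
    rw [h1]
    exact (norm_le_pi_norm (a - x₀) i).trans (by rwa [← dist_eq_norm])
  set p : Fin k → (Fin k → ℝ) := fun i => x₀ + Pi.single i ((k : ℝ) * c i) with hp_def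
  have hid : (∑ i, ((k:ℝ)⁻¹) • p i) = a := by
    funext j
    simp only [Finset.sum_apply, Pi.smul_apply, hp_def, Pi.add_apply, smul_eq_mul, mul_add]
    rw [Finset.sum_add_distrib]
    have h1 : ∑ _i : Fin k, (k:ℝ)⁻¹ * x₀ j = x₀ j := by
      rw [Finset.sum_const, Finset.card_univ, Fintype.card_fin, nsmul_eq_mul]
      field_simp
    have h2 : ∑ i : Fin k, (k:ℝ)⁻¹ * (Pi.single i ((k:ℝ) * c i) : Fin k → ℝ) j = c j := by
      have : ∀ i : Fin k, (k:ℝ)⁻¹ * (Pi.single i ((k:ℝ) * c i) : Fin k → ℝ) j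
          = (Pi.single i ((k:ℝ)⁻¹ * ((k:ℝ) * c i)) : Fin k → ℝ) j := by
        intro i
        simp [Pi.single_apply, mul_ite]
      simp_rw [this]
      rw [Fintype.sum_pi_single j (fun i => (k:ℝ)⁻¹ * ((k:ℝ) * c i))]
      field_simp
    rw [h1, h2]; simp [hc_def]
  have hw : (∑ _i : Fin k, ((k:ℝ)⁻¹)) = 1 := by
    rw [Finset.sum_const, Finset.card_univ, Fintype.card_fin, nsmul_eq_mul]
    field_simp
  have hpC : ∀ i, F (p i) ≤ C := by
    intro i
    set R' : ℝ := (k:ℝ) * R with hR'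
    have hR'0 : (0:ℝ) < R' := by positivity
    set d : ℝ := (k:ℝ) * c i with hd
    have hdle : |d| ≤ R' := by
      rw [hd, hR', abs_mul, abs_of_nonneg hkR.le]
      exact mul_le_mul_of_nonneg_left (hc i) hkR.le
    obtain ⟨hd1, hd2⟩ := abs_le.1 hdle
    set α : ℝ := (R' - d)/(2*R') with hα_def
    set β : ℝ := (R' + d)/(2*R') with hβ_def
    have hα : 0 ≤ α := div_nonneg (by linarith) (by linarith)
    have hβ : 0 ≤ β := div_nonneg (by linarith) (by linarith)
    have hab : α + β = 1 := by
      rw [hα_def, hβ_def, ← add_div]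
      field_simp
      ring
    have hcomb : α • (x₀ + Pi.single i (-R')) + β • (x₀ + Pi.single i R') = p i := by
      funext j
      simp only [Pi.add_apply, Pi.smul_apply, smul_eq_mul, hp_def, Pi.single_apply]
      split_ifs with h
      · rw [hα_def, hβ_def]; field_simp; ring
      · simp only [mul_add, mul_zero, add_zero]
        rw [← add_mul, hab, one_mul]
    have hconv := hF.2 (Set.mem_univ (x₀ + Pi.single i (-R')))
      (Set.mem_univ (x₀ + Pi.single i R')) hα hβ hab
    rw [hcomb] at hconv
    have hv1 : F (x₀ + Pi.single i (-R')) ≤ C := by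
      have := hC i false; simpa [hR'] using this
    have hv2 : F (x₀ + Pi.single i R') ≤ C := by
      have := hC i true; simpa [hR'] using this
    calc F (p i) ≤ α • F (x₀ + Pi.single i (-R')) + β • F (x₀ + Pi.single i R') := hconv
      _ ≤ α * C + β * C := by
          simp only [smul_eq_mul]
          exact add_le_add (mul_le_mul_of_nonneg_left hv1 hα) (mul_le_mul_of_nonneg_left hv2 hβ)
      _ = C := by rw [← add_mul, hab, one_mul]
  have hj := hF.map_sum_le (t := Finset.univ) (w := fun _ : Fin k => (k:ℝ)⁻¹) (p := p)
    (fun i _ => by positivity) (by simpa using hw) (fun i _ => Set.mem_univ _)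
  calc F a = F (∑ i, ((k:ℝ)⁻¹) • p i) := by rw [hid]
    _ ≤ ∑ i : Fin k, ((k:ℝ)⁻¹) • F (p i) := hj
    _ ≤ ∑ _i : Fin k, ((k:ℝ)⁻¹) * C := by
        refine Finset.sum_le_sum fun i _ => ?_
        simp only [smul_eq_mul]
        exact mul_le_mul_of_nonneg_left (hpC i) (by positivity)
    _ = C := by
        rw [Finset.sum_const, Finset.card_univ, Fintype.card_fin, nsmul_eq_mul]
        field_simp

/-- If convex `f_m → f` pointwise on `ℝᵏ`, `f` has a unique minimizer
`x*`, and `x_m` is a minimizer of `f_m` for each `m`, then `x_m → x*`. -/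
theorem stmt14 {k : ℕ} (f : ℕ → (Fin k → ℝ) → ℝ) (g : (Fin k → ℝ) → ℝ)
    (hf : ∀ m, ConvexOn ℝ Set.univ (f m))
    (hg : ConvexOn ℝ Set.univ g)
    (hpt : ∀ x, Tendsto (fun m => f m x) atTop (𝓝 (g x)))
    (xstar : Fin k → ℝ)
    (hmin : ∀ x, g xstar ≤ g x)
    (huniq : ∀ x, x ≠ xstar → g xstar < g x)
    (xm : ℕ → Fin k → ℝ)
    (hxm : ∀ m (x : Fin k → ℝ), f m (xm m) ≤ f m x) :
    Tendsto xm atTop (𝓝 xstar) := by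
  rcases eq_or_ne k 0 with rfl | hk
  · have : xm = fun _ => xstar := funext fun m => funext fun i => i.elim0
    rw [this]; exact tendsto_const_nhds
  rw [Metric.tendsto_nhds]
  intro ε hε
  suffices key : ∀ᶠ m in atTop, ∀ y, dist y xstar = ε → f m xstar < f m y by
    filter_upwards [key] with m hm
    by_contra hcon
    push_neg at hcon
    have hd : 0 < dist (xm m) xstar := lt_of_lt_of_le hε hcon
    set t : ℝ := ε / dist (xm m) xstar with ht_def
    have ht0 : 0 < t := div_pos hε hd
    have ht1 : t ≤ 1 := (div_le_one hd).2 hcon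
    set y := xstar + t • (xm m - xstar) with hy
    have hdy : dist y xstar = ε := by
      have hh : dist y xstar = t * dist (xm m) xstar := by
        rw [hy, dist_eq_norm, add_sub_cancel_left, norm_smul, Real.norm_eq_abs,
          abs_of_pos ht0, dist_eq_norm]
      rw [hh, ht_def, div_mul_cancel₀ _ hd.ne']
    have hcomb : (1 - t) • xstar + t • (xm m) = y := by
      rw [hy, sub_smul, one_smul, smul_sub]; abel
    have hconv := (hf m).2 (Set.mem_univ xstar) (Set.mem_univ (xm m))
      (show (0:ℝ) ≤ 1 - t by linarith) ht0.le (show (1 - t) + t = 1 by ring)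
    rw [hcomb] at hconv
    have hle : f m y ≤ f m xstar := by
      have h1 : t * f m (xm m) ≤ t * f m xstar :=
        mul_le_mul_of_nonneg_left (hxm m xstar) ht0.le
      simp only [smul_eq_mul] at hconv
      nlinarith
    exact absurd (hm y hdy) (not_lt.2 hle)
  -- now prove key
  haveI : Nonempty (Fin k) := Fin.pos_iff_nonempty.1 (Nat.pos_of_ne_zero hk)
  have hg_cont : Continuous g := hg.locallyLipschitz.continuous
  set S := Metric.sphere xstar ε with hS_def
  have hScomp : IsCompact S := isCompact_sphere xstar ε
  have hSne : S.Nonempty := NormedSpace.sphere_nonempty.2 hε.le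
  obtain ⟨y₀, hy₀S, hy₀min⟩ := hScomp.exists_isMinOn hSne hg_cont.continuousOn
  have hy₀ne : y₀ ≠ xstar := by
    intro h
    rw [hS_def, Metric.mem_sphere, h, dist_self] at hy₀S
    exact hε.ne hy₀S
  set Δ : ℝ := g y₀ - g xstar with hΔ_def
  have hΔ : 0 < Δ := sub_pos.2 (huniq y₀ hy₀ne)
  -- vertices and global constants
  set vert : Fin k × Bool → (Fin k → ℝ) := fun ib =>
    xstar + Pi.single ib.1 (if ib.2 then (k : ℝ) * (4 * ε) else -((k : ℝ) * (4 * ε))) with hvert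
  set C : ℝ := (Finset.univ.sup' Finset.univ_nonempty fun ib => g (vert ib)) + 1 with hC_def
  set M : ℝ := |C| + 2 * |g xstar| + 2 with hM_def
  have hM0 : 0 < M := by positivity
  set K : NNReal := (2 * M / (2 * ε)).toNNReal with hK_def
  set δ : ℝ := min ε (Δ / (4 * ((K : ℝ) + 1))) with hδ_def
  have hK0 : (0:ℝ) ≤ (K : ℝ) := K.coe_nonneg
  have hδ0 : 0 < δ := lt_min hε (by positivity)
  -- finite subcover of the sphere by δ-balls
  obtain ⟨T, hTS, hTfin, hTcov⟩ := hScomp.elim_finite_subcover_image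
    (fun y (_ : y ∈ S) => Metric.isOpen_ball (x := y) (ε := δ))
    (fun y hy => Set.mem_biUnion hy (Metric.mem_ball_self hδ0))
  -- eventual facts
  have E1 : ∀ᶠ m in atTop, ∀ ib : Fin k × Bool, f m (vert ib) ≤ C := by
    rw [eventually_all]
    intro ib
    have h1 : g (vert ib) < C := by
      rw [hC_def]
      have := Finset.le_sup' (fun ib => g (vert ib)) (Finset.mem_univ ib)
      linarith
    exact ((hpt (vert ib)).eventually (eventually_le_nhds h1))
  have E2 : ∀ᶠ m in atTop, dist (f m xstar) (g xstar) < min 1 (Δ / 4) :=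
    Metric.tendsto_nhds.1 (hpt xstar) _ (lt_min one_pos (by positivity))
  have E3 : ∀ᶠ m in atTop, ∀ t ∈ T, dist (f m t) (g t) < Δ / 4 := by
    rw [eventually_all_finite hTfin]
    intro t _
    exact Metric.tendsto_nhds.1 (hpt t) _ (by positivity)
  filter_upwards [E1, E2, E3] with m h1 h2 h3
  -- uniform bound on the big ball
  have hbound : ∀ a, dist a xstar ≤ 4 * ε → f m a ≤ C := by
    intro a ha
    exact aux_bound hk (hf m) xstar (by positivity) (fun i b => h1 (i, b)) a ha
  rw [Real.dist_eq, abs_lt] at h2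
  have hfxstar_lb : g xstar - 1 ≤ f m xstar := by
    have := h2.1
    have h1' : min 1 (Δ / 4) ≤ 1 := min_le_left _ _
    linarith
  have habs : ∀ a, dist a xstar < 4 * ε → |f m a| ≤ M := by
    intro a ha
    have hup : f m a ≤ C := hbound a ha.le
    set a' := xstar + (xstar - a) with ha'_def
    have hda' : dist a' xstar = dist a xstar := by
      rw [ha'_def, dist_eq_norm, add_sub_cancel_left, dist_eq_norm, norm_sub_rev]
    have hup' : f m a' ≤ C := hbound a' (by rw [hda']; exact ha.le)
    have hmid : (1/2 : ℝ) • a + (1/2 : ℝ) • a' = xstar := by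
      rw [ha'_def]
      funext j
      simp only [Pi.add_apply, Pi.smul_apply, Pi.sub_apply, smul_eq_mul]
      ring
    have hcv := (hf m).2 (Set.mem_univ a) (Set.mem_univ a')
      (by norm_num : (0:ℝ) ≤ 1/2) (by norm_num : (0:ℝ) ≤ 1/2) (by norm_num)
    rw [hmid] at hcv
    simp only [smul_eq_mul] at hcv
    rw [abs_le]
    constructor
    · have hca := le_abs_self C
      have hgx1 := le_abs_self (g xstar)
      have hgx2 := neg_abs_le (g xstar)
      rw [hM_def]
      nlinarith
    · have hca := le_abs_self C
      rw [hM_def]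
      have := abs_nonneg (g xstar)
      linarith
  -- Lipschitz on the middle ball
  have hlip : LipschitzOnWith K (f m) (Metric.ball xstar (4 * ε - 2 * ε)) := by
    rw [hK_def]
    exact ConvexOn.lipschitzOnWith_of_abs_le
      (((hf m)).subset (Set.subset_univ _) (convex_ball _ _)) (by positivity) habs
  have h42 : 4 * ε - 2 * ε = 2 * ε := by ring
  rw [h42] at hlip
  -- conclude
  intro y hy
  have hyS : y ∈ S := by rwa [hS_def, Metric.mem_sphere]
  obtain ⟨t, htT, hyt⟩ := Set.mem_iUnion₂.1 (hTcov hyS)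
  have htS : t ∈ S := hTS htT
  have hy2 : y ∈ Metric.ball xstar (2 * ε) := by
    rw [Metric.mem_ball]
    rw [hS_def, Metric.mem_sphere] at hyS
    linarith
  have ht2 : t ∈ Metric.ball xstar (2 * ε) := by
    rw [Metric.mem_ball]
    rw [hS_def, Metric.mem_sphere] at htS
    linarith
  have hd1 : dist (f m y) (f m t) ≤ (K : ℝ) * dist y t := hlip.dist_le_mul y hy2 t ht2
  have hdyT : dist y t < δ := Metric.mem_ball.1 hyt
  have hKδ : (K : ℝ) * dist y t ≤ Δ / 4 := by
    have h1' : (K : ℝ) * dist y t ≤ ((K : ℝ) + 1) * δ := by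
      have := dist_nonneg (x := y) (y := t)
      nlinarith
    have h2' : ((K : ℝ) + 1) * δ ≤ Δ / 4 := by
      have hδle : δ ≤ Δ / (4 * ((K : ℝ) + 1)) := min_le_right _ _
      rw [le_div_iff₀ (by positivity)] at hδle
      nlinarith
    linarith
  have hgt : g y₀ ≤ g t := hy₀min htS
  have h3' := h3 t htT
  rw [Real.dist_eq, abs_lt] at h3'
  have hfy : g xstar + Δ / 2 ≤ f m y := by
    have h4 : |f m y - f m t| ≤ Δ / 4 := by
      rw [← Real.dist_eq]; exact hd1.trans hKδ
    have h5 := (abs_le.1 h4).1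
    linarith [h3'.1, hgt, hΔ_def]
  
  have hfx : f m xstar < g xstar + Δ / 4 := by
    have h6 : f m xstar - g xstar < Δ / 4 := lt_of_lt_of_le h2.2 (min_le_right _ _)
    linarith
  linarith
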